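/- On the elliptic curve E : 47y^2 = 4x^3 + 28x^2 + 24x + 47 over Q, the points P_1 = (-1, 1) and P_2 = (0, -1) are rational points, and P_1 + 3P_2 ≠ O, and P_2 has infinite order. -/

import Mathlib

open WeierstrassCurve.Affine

/-- The Weierstrass model of the curve `𝒞 : 47y² = 4x³ + 28x² + 24x + 47`,
obtained by the standard change of variables `(x, y) ↦ (188x, 8836y)`. -/
noncomputable def E10 : WeierstrassCurve.Affine ℚ :=
  { a₁ := 0, a₂ := 1316, a₃ := 0, a₄ := 212064, a₆ := 78074896 }

@[simp] lemma E10_a₁ : E10.a₁ = 0 := rfl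
@[simp] lemma E10_a₂ : E10.a₂ = 1316 := rfl
@[simp] lemma E10_a₃ : E10.a₃ = 0 := rfl
@[simp] lemma E10_a₄ : E10.a₄ = 212064 := rfl
@[simp] lemma E10_a₆ : E10.a₆ = 78074896 := rfl

/-- Helper: two `some` points with equal coordinates are equal. -/
lemma some_congr {F : Type*} [Field F] {W : WeierstrassCurve.Affine F}
    {x₁ y₁ x₂ y₂ : F} (hx : x₁ = x₂) (hy : y₁ = y₂)
    (h₁ : W.Nonsingular x₁ y₁) (h₂ : W.Nonsingular x₂ y₂) :
    Point.some _ _ h₁ = Point.some _ _ h₂ := by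
  subst hx; subst hy; rfl

/-- The quartic `u⁴ - 2632u² + 70688u + 883600` has no rational root
(mod 13 descent on numerator/denominator). -/
lemma quarticNoRoot (u : ℚ) : u ^ 4 - 2632 * u ^ 2 + 70688 * u + 883600 ≠ 0 := by
  intro hu
  have hd : ((u.den : ℚ)) ≠ 0 := by exact_mod_cast u.den_ne_zero
  have hm : (u.num : ℚ) = u * (u.den : ℚ) := by
    field_simp [Rat.num_div_den u]
    exact (Rat.mul_den_eq_num u).symm
  have key : (u.num : ℚ) ^ 4 - 2632 * (u.num : ℚ) ^ 2 * (u.den : ℚ) ^ 2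
      + 70688 * (u.num : ℚ) * (u.den : ℚ) ^ 3 + 883600 * (u.den : ℚ) ^ 4 = 0 := by
    rw [hm]; linear_combination (u.den : ℚ) ^ 4 * hu
  have kz : u.num ^ 4 - 2632 * u.num ^ 2 * (u.den : ℤ) ^ 2
      + 70688 * u.num * (u.den : ℤ) ^ 3 + 883600 * (u.den : ℤ) ^ 4 = 0 := by
    exact_mod_cast key
  have h13 : (u.num : ZMod 13) ^ 4 - 2632 * (u.num : ZMod 13) ^ 2 * (u.den : ZMod 13) ^ 2
      + 70688 * (u.num : ZMod 13) * (u.den : ZMod 13) ^ 3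
      + 883600 * (u.den : ZMod 13) ^ 4 = 0 := by
    have := congrArg (fun z : ℤ => (z : ZMod 13)) kz
    push_cast at this
    exact this
  have hmn : ∀ a b : ZMod 13,
      a ^ 4 - 2632 * a ^ 2 * b ^ 2 + 70688 * a * b ^ 3 + 883600 * b ^ 4 = 0 →
      a = 0 ∧ b = 0 := by decide
  obtain ⟨ha, hb⟩ := hmn _ _ h13
  have h1 : (13 : ℤ) ∣ u.num := by
    exact_mod_cast (ZMod.intCast_zmod_eq_zero_iff_dvd u.num 13).mp ha
  have h2 : (13 : ℕ) ∣ u.den := (ZMod.natCast_eq_zero_iff u.den 13).mp hb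
  have h1' : (13 : ℕ) ∣ u.num.natAbs := by
    have := Int.natAbs_dvd_natAbs.mpr h1
    simpa using this
  have : (13 : ℕ) ∣ 1 := u.reduced ▸ Nat.dvd_gcd h1' h2
  norm_num at this

/-- The cubic `x³ + 1316x² + 212064x + 78074896` has no rational root
(mod 3 descent on numerator/denominator). -/
lemma cubicNoRoot (x : ℚ) : x ^ 3 + 1316 * x ^ 2 + 212064 * x + 78074896 ≠ 0 := by
  intro hx
  have hd : ((x.den : ℚ)) ≠ 0 := by exact_mod_cast x.den_ne_zero
  have hm : (x.num : ℚ) = x * (x.den : ℚ) := by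
    field_simp [Rat.num_div_den x]
    exact (Rat.mul_den_eq_num x).symm
  have key : (x.num : ℚ) ^ 3 + 1316 * (x.num : ℚ) ^ 2 * (x.den : ℚ)
      + 212064 * (x.num : ℚ) * (x.den : ℚ) ^ 2 + 78074896 * (x.den : ℚ) ^ 3 = 0 := by
    rw [hm]; linear_combination (x.den : ℚ) ^ 3 * hx
  have kz : x.num ^ 3 + 1316 * x.num ^ 2 * (x.den : ℤ)
      + 212064 * x.num * (x.den : ℤ) ^ 2 + 78074896 * (x.den : ℤ) ^ 3 = 0 := by
    exact_mod_cast key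
  have h3 : (x.num : ZMod 3) ^ 3 + 1316 * (x.num : ZMod 3) ^ 2 * (x.den : ZMod 3)
      + 212064 * (x.num : ZMod 3) * (x.den : ZMod 3) ^ 2
      + 78074896 * (x.den : ZMod 3) ^ 3 = 0 := by
    have := congrArg (fun z : ℤ => (z : ZMod 3)) kz
    push_cast at this
    exact this
  have hmn : ∀ a b : ZMod 3,
      a ^ 3 + 1316 * a ^ 2 * b + 212064 * a * b ^ 2 + 78074896 * b ^ 3 = 0 →
      a = 0 ∧ b = 0 := by decide
  obtain ⟨ha, hb⟩ := hmn _ _ h3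
  have h1 : (3 : ℤ) ∣ x.num := by
    exact_mod_cast (ZMod.intCast_zmod_eq_zero_iff_dvd x.num 3).mp ha
  have h2 : (3 : ℕ) ∣ x.den := (ZMod.natCast_eq_zero_iff x.den 3).mp hb
  have h1' : (3 : ℕ) ∣ x.num.natAbs := by
    have := Int.natAbs_dvd_natAbs.mpr h1
    simpa using this
  have : (3 : ℕ) ∣ 1 := x.reduced ▸ Nat.dvd_gcd h1' h2
  norm_num at this

/-- Key algebraic fact: the tangent-line equations for `2Q = P₂` have no
rational solution. -/
lemma keyNoHalf (x y l : ℚ)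
    (e1 : y ^ 2 = x ^ 3 + 1316 * x ^ 2 + 212064 * x + 78074896)
    (e2 : 2 * l * y = 3 * x ^ 2 + 2632 * x + 212064)
    (e3 : l ^ 2 = 1316 + 2 * x) : False := by
  have c0 : (y - l * x) ^ 2 = 78074896 := by
    linear_combination e1 - x * e2 + x ^ 2 * e3
  have c1 : 2 * l * (y - l * x) = 212064 - x ^ 2 := by
    linear_combination e2 - 2 * x * e3
  have hfac : (y - l * x - 8836) * (y - l * x + 8836) = 0 := by linear_combination c0
  rcases mul_eq_zero.mp hfac with h | h
  · apply quarticNoRoot l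
    have hν : y - l * x = 8836 := by linarith
    have hl : 17672 * l = 212064 - x ^ 2 := by rw [hν] at c1; linarith
    linear_combination (l ^ 2 - 1316 + 2 * x) * e3 + 4 * hl
  · apply quarticNoRoot (-l)
    have hν : y - l * x = -8836 := by linarith
    have hl : 17672 * (-l) = 212064 - x ^ 2 := by rw [hν] at c1; linarith
    linear_combination (l ^ 2 - 1316 + 2 * x) * e3 + 4 * hl

/-- The x-coordinate of a point (0 for the point at infinity). -/
def ptX {F : Type*} [Field F] {W : WeierstrassCurve.Affine F} : W.Point → F
  | .zero => 0
  | @Point.some _ _ _ x _ _ => x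

/-- `E10` has no rational 2-torsion. -/
lemma no_two_torsion (P : E10.Point) (h : P + P = 0) : P = 0 := by
  cases P with
  | zero => rfl
  | @some x y hP =>
    by_cases hy : y = E10.negY x y
    · exfalso
      have hy0 : y = 0 := by
        simp only [negY, E10_a₁, E10_a₃] at hy
        linarith
      have heq := hP.1
      rw [equation_iff] at heq
      simp only [E10_a₁, E10_a₂, E10_a₃, E10_a₄, E10_a₆, hy0] at heq
      apply cubicNoRoot x
      linarith
    · rw [Point.add_self_of_Y_ne hy] at h
      exact absurd h (Point.some_ne_zero _)

/-- No rational point `Q` on `E10` satisfies `Q + Q = P₂`. -/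
lemma no_half (h₂ : E10.Nonsingular (188 * 0 : ℚ) (8836 * (-1) : ℚ))
    (Q : E10.Point) : Q + Q ≠ Point.some _ _ h₂ := by
  cases Q with
  | zero =>
    intro h
    exact absurd h.symm (Point.some_ne_zero _)
  | @some x y hQ =>
    intro h
    by_cases hy : y = E10.negY x y
    · rw [Point.add_self_of_Y_eq hy] at h
      exact absurd h.symm (Point.some_ne_zero _)
    · rw [Point.add_self_of_Y_ne hy] at h
      have hX : E10.addX x x (E10.slope x x y y) = 188 * 0 := congrArg ptX h
      have hy0 : y ≠ 0 := by
        intro h0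
        apply hy
        simp [negY, h0]
      obtain ⟨l, hl⟩ : ∃ l, E10.slope x x y y = l := ⟨_, rfl⟩
      rw [hl] at hX
      have hden : y - E10.negY x y ≠ 0 := sub_ne_zero.mpr hy
      have e2' : l * (y - E10.negY x y)
          = 3 * x ^ 2 + 2 * E10.a₂ * x + E10.a₄ - E10.a₁ * y := by
        rw [← hl, slope_of_Y_ne rfl hy, div_mul_cancel₀ _ hden]
      have e2 : 2 * l * y = 3 * x ^ 2 + 2632 * x + 212064 := by
        simp only [negY, E10_a₁, E10_a₂, E10_a₃, E10_a₄] at e2'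
        linear_combination e2'
      have e3 : l ^ 2 = 1316 + 2 * x := by
        simp only [addX, E10_a₁, E10_a₂] at hX
        linarith [hX]
      have e1 : y ^ 2 = x ^ 3 + 1316 * x ^ 2 + 212064 * x + 78074896 := by
        have heq := hQ.1
        rw [equation_iff] at heq
        simp only [E10_a₁, E10_a₂, E10_a₃, E10_a₄, E10_a₆] at heq
        linarith
      exact keyNoHalf x y l e1 e2 e3

theorem kry_curve_points :
    (47 * (1 : ℚ) ^ 2 = 4 * (-1 : ℚ) ^ 3 + 28 * (-1 : ℚ) ^ 2 + 24 * (-1) + 47) ∧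
    (47 * (-1 : ℚ) ^ 2 = 4 * (0 : ℚ) ^ 3 + 28 * (0 : ℚ) ^ 2 + 24 * 0 + 47) ∧
    ∃ (h₁ : E10.Nonsingular (188 * (-1) : ℚ) (8836 * 1 : ℚ))
      (h₂ : E10.Nonsingular (188 * 0 : ℚ) (8836 * (-1) : ℚ)),
      Point.some _ _ h₁ + (3 : ℤ) • Point.some _ _ h₂ ≠ 0 ∧
      addOrderOf (Point.some _ _ h₂) = 0 := by
  have h₁ : E10.Nonsingular (188 * (-1) : ℚ) (8836 * 1 : ℚ) := by
    rw [nonsingular_iff, equation_iff]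
    norm_num
  have h₂ : E10.Nonsingular (188 * 0 : ℚ) (8836 * (-1) : ℚ) := by
    rw [nonsingular_iff, equation_iff]
    norm_num
  refine ⟨by norm_num, by norm_num, h₁, h₂, ?_, ?_⟩
  · -- P₁ + 3 P₂ ≠ 0
    have hy2 : (8836 * (-1) : ℚ) ≠ E10.negY (188 * 0) (8836 * (-1)) := by
      simp only [negY, E10_a₁, E10_a₃]
      norm_num
    have hA : E10.Nonsingular (-1172 : ℚ) (-5228 : ℚ) := by
      rw [nonsingular_iff, equation_iff]
      norm_num
    have e2P : Point.some _ _ h₂ + Point.some _ _ h₂ = Point.some _ _ hA := by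
      rw [Point.add_self_of_Y_ne hy2]
      refine some_congr ?_ ?_ _ hA
      · rw [slope_of_Y_ne rfl hy2]
        simp only [addX, negY, E10_a₁, E10_a₂, E10_a₃, E10_a₄]
        norm_num
      · rw [slope_of_Y_ne rfl hy2]
        simp only [addY, negAddY, addX, negY, E10_a₁, E10_a₂, E10_a₃, E10_a₄]
        norm_num
    have hB : E10.Nonsingular (-11548652 / 85849 : ℚ) (211841712748 / 25153757 : ℚ) := by
      rw [nonsingular_iff, equation_iff]
      norm_num
    have hx12 : (188 * 0 : ℚ) ≠ (-1172 : ℚ) := by norm_num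
    have e3P : Point.some _ _ h₂ + Point.some _ _ hA = Point.some _ _ hB := by
      rw [Point.add_of_X_ne hx12]
      refine some_congr ?_ ?_ _ hB
      · rw [slope_of_X_ne hx12]
        simp only [addX, E10_a₁, E10_a₂]
        norm_num
      · rw [slope_of_X_ne hx12]
        simp only [addY, negAddY, addX, negY, E10_a₁, E10_a₂, E10_a₃]
        norm_num
    have h3smul : (3 : ℤ) • Point.some _ _ h₂ = Point.some _ _ hB := by
      rw [show (3 : ℤ) = 1 + 2 by norm_num, add_zsmul, one_zsmul, two_zsmul, e2P, e3P]
    rw [h3smul]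
    have hx3 : (188 * (-1) : ℚ) ≠ (-11548652 / 85849 : ℚ) := by norm_num
    rw [Point.add_of_X_ne hx3]
    exact Point.some_ne_zero _
  · -- P₂ has infinite order
    by_contra h0
    have hpos : 0 < addOrderOf (Point.some _ _ h₂) := Nat.pos_of_ne_zero h0
    have hn : addOrderOf (Point.some _ _ h₂) • Point.some _ _ h₂ = 0 :=
      addOrderOf_nsmul_eq_zero _
    rcases Nat.even_or_odd (addOrderOf (Point.some _ _ h₂)) with ⟨k, hk⟩ | ⟨k, hk⟩
    · have hkk : k • Point.some _ _ h₂ + k • Point.some _ _ h₂ = 0 := by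
        rw [← add_nsmul, ← hk, hn]
      have hk0 := no_two_torsion _ hkk
      have hdvd := addOrderOf_dvd_of_nsmul_eq_zero hk0
      have hkpos : 0 < k := by omega
      have := Nat.le_of_dvd hkpos hdvd
      omega
    · apply no_half h₂ ((k + 1) • Point.some _ _ h₂)
      rw [← add_nsmul,
        show (k + 1) + (k + 1) = addOrderOf (Point.some _ _ h₂) + 1 by omega,
        succ_nsmul, hn, zero_add]
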